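/- Stuffle identity for Eulerian kernels: for positive integers s_1, s_2, r_1, r_2, 0<q<1 and n ≥ 1, the product [n^{r_1-1}P_{s_1-1}(q^n)/((s_1-1)!(r_1-1)!(1-q^n)^{s_1})]·[n^{r_2-1}P_{s_2-1}(q^n)/((s_2-1)!(r_2-1)!(1-q^n)^{s_2})] equals C(r_1+r_2-2, r_1-1)·(n^{r_1+r_2-2}/(r_1+r_2-2)!)·[ P_{s_1+s_2-1}(q^n)/((s_1+s_2-1)!(1-q^n)^{s_1+s_2}) + Σ_{j=1}^{s_1} (−1)^{s_2-1} C(s_1+s_2−j−1, s_1−j) λ_{s_1+s_2−j} P_{j-1}(q^n)/((j-1)!(1-q^n)^j) + Σ_{j=1}^{s_2} (−1)^{s_1-1} C(s_1+s_2−j−1, s_2−j) λ_{s_1+s_2−j} P_{j-1}(q^n)/((j-1)!(1-q^n)^j) ], where λ_s are defined by −x/(1−e^x) = Σ λ_s x^s. -/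

import Mathlib

open scoped Nat

open Finset

private def lamB (s : ℕ) : ℚ := bernoulli s / (s ! : ℚ)

private def Sq (a b m : ℕ) : ℚ :=
  ∑ i ∈ range a,
    ((a + b - 2 - i).choose (a - 1 - i) : ℚ) * lamB (a + b - 1 - i) * (m : ℚ) ^ i / (i ! : ℚ)

private def Rq (a b m : ℕ) : ℚ :=
  (m : ℚ) ^ (a + b - 1) / ((a + b - 1)! : ℚ) + (-1) ^ (b - 1) * Sq a b m
    + (-1) ^ (a - 1) * Sq b a m

private lemma stepS (a b m : ℕ) :
    (a : ℚ) * Sq (a + 1) b m = (m : ℚ) * Sq a b m + (b : ℚ) * Sq a (b + 1) m := by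
  have eq2 : (m : ℚ) * Sq a b m =
      ∑ i ∈ range (a + 1),
        (i : ℚ) * ((a + b - 1 - i).choose (a - i) : ℚ) * lamB (a + b - i) * (m : ℚ) ^ i / (i ! : ℚ) := by
    rw [Sq, mul_sum, sum_range_succ']
    norm_num
    refine sum_congr rfl fun i hi => ?_
    rw [show a + b - 1 - (i + 1) = a + b - 2 - i by omega,
        show a - (i + 1) = a - 1 - i by omega,
        show a + b - (i + 1) = a + b - 1 - i by omega,
        Nat.factorial_succ, pow_succ]
    have h0 : (i ! : ℚ) ≠ 0 := by exact_mod_cast (Nat.factorial_pos i).ne'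
    push_cast
    field_simp
  have key : ∀ i ∈ range a,
      (a : ℚ) * (((a + b - 1 - i).choose (a - i) : ℚ) * lamB (a + b - i) * (m : ℚ) ^ i / (i ! : ℚ))
        = (i : ℚ) * ((a + b - 1 - i).choose (a - i) : ℚ) * lamB (a + b - i) * (m : ℚ) ^ i / (i ! : ℚ)
          + (b : ℚ) * (((a + b - 1 - i).choose (a - 1 - i) : ℚ) * lamB (a + b - i) * (m : ℚ) ^ i / (i ! : ℚ)) := by
    intro i hi
    have hi' : i < a := mem_range.1 hi
    have hcc := Nat.choose_succ_right_eq (a + b - 1 - i) (a - 1 - i)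
    rw [show a - 1 - i + 1 = a - i by omega, show a + b - 1 - i - (a - 1 - i) = b by omega] at hcc
    have hq : ((a + b - 1 - i).choose (a - i) : ℚ) * ((a : ℚ) - i)
        = ((a + b - 1 - i).choose (a - 1 - i) : ℚ) * b := by
      have h6 : ((a - i : ℕ) : ℚ) = (a : ℚ) - i := by
        rw [Nat.cast_sub hi'.le]
      rw [← h6]; exact_mod_cast hcc
    linear_combination (lamB (a + b - i) * (m : ℚ) ^ i / (i ! : ℚ)) * hq
  rw [eq2, Sq, Sq, mul_sum, mul_sum]
  simp only [show ∀ i : ℕ, a + 1 + b - 2 - i = a + b - 1 - i from fun i => by omega,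
    show ∀ i : ℕ, a + 1 - 1 - i = a - i from fun i => by omega,
    show ∀ i : ℕ, a + 1 + b - 1 - i = a + b - i from fun i => by omega,
    show ∀ i : ℕ, a + (b + 1) - 2 - i = a + b - 1 - i from fun i => by omega,
    show ∀ i : ℕ, a + (b + 1) - 1 - i = a + b - i from fun i => by omega]
  rw [sum_range_succ, sum_range_succ (fun i => (i : ℚ) * ((a + b - 1 - i).choose (a - i) : ℚ) * lamB (a + b - i) * (m : ℚ) ^ i / (i ! : ℚ))]
  rw [sum_congr rfl key, sum_add_distrib]
  ring

private lemma stepR (a b m : ℕ) (ha : 1 ≤ a) (hb : 1 ≤ b) :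
    (a : ℚ) * Rq (a + 1) b m = (m : ℚ) * Rq a b m - (b : ℚ) * Rq a (b + 1) m := by
  obtain ⟨a, rfl⟩ : ∃ a', a = a' + 1 := ⟨a - 1, by omega⟩
  obtain ⟨b, rfl⟩ : ∃ b', b = b' + 1 := ⟨b - 1, by omega⟩
  have h1 := stepS (a + 1) (b + 1) m
  have h2 := stepS (b + 1) (a + 1) m
  simp only [Rq, show a + 1 + 1 + (b + 1) - 1 = a + b + 2 by omega,
    show a + 1 + (b + 1) - 1 = a + b + 1 by omega,
    show a + 1 + (b + 1 + 1) - 1 = a + b + 2 by omega,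
    show a + 1 + 1 - 1 = a + 1 by omega, show b + 1 + 1 - 1 = b + 1 by omega,
    show a + 1 - 1 = a by omega, show b + 1 - 1 = b by omega]
  have hfac : ((a + b + 2)! : ℚ) = ((a + b + 1)! : ℚ) * (a + b + 2) := by
    rw [show a + b + 2 = (a + b + 1) + 1 by omega, Nat.factorial_succ]; push_cast; ring
  have hf0 : ((a + b + 1)! : ℚ) ≠ 0 := by exact_mod_cast (Nat.factorial_pos _).ne'
  have hpow : ((a:ℚ) + 1) * ((m : ℚ) ^ (a + b + 2) / ((a + b + 2)! : ℚ))
      + ((b:ℚ) + 1) * ((m : ℚ) ^ (a + b + 2) / ((a + b + 2)! : ℚ))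
      = (m : ℚ) * ((m : ℚ) ^ (a + b + 1) / ((a + b + 1)! : ℚ)) := by
    rw [hfac, show a + b + 2 = (a + b + 1) + 1 by omega, pow_succ]
    field_simp
    ring
  rw [pow_succ (-1 : ℚ) b, pow_succ (-1 : ℚ) a] at *
  push_cast at h1 h2 ⊢
  linear_combination hpow + (-1 : ℚ) ^ b * h1 + (-1 : ℚ) ^ a * h2

private lemma convo (a : ℕ) (ha : 1 ≤ a) (b : ℕ) (hb : 1 ≤ b) (m : ℕ) (hm : 1 ≤ m) :
    ∑ d ∈ range (m - 1), ((d + 1 : ℕ) : ℚ) ^ (a - 1) * ((m : ℚ) - ((d : ℚ) + 1)) ^ (b - 1)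
      = (((a - 1)! : ℕ) : ℚ) * (((b - 1)! : ℕ) : ℚ) * Rq a b m := by
  induction a, ha using Nat.le_induction generalizing b with
  | base =>
    simp only [Nat.sub_self, pow_zero, one_mul, Nat.factorial_zero, Nat.cast_one]
    have hrefl : ∑ d ∈ range (m - 1), ((m : ℚ) - ((d : ℚ) + 1)) ^ (b - 1)
        = ∑ d ∈ range (m - 1), ((d + 1 : ℕ) : ℚ) ^ (b - 1) := by
      rw [← Finset.sum_range_reflect (fun j => ((j + 1 : ℕ) : ℚ) ^ (b - 1)) (m - 1)]
      refine sum_congr rfl fun j hj => ?_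
      have hj' : j < m - 1 := mem_range.1 hj
      rw [show m - 1 - 1 - j + 1 = m - (j + 1) by omega, Nat.cast_sub (by omega : j + 1 ≤ m)]
      push_cast; ring_nf
    have hshift : ∑ d ∈ range (m - 1), ((d + 1 : ℕ) : ℚ) ^ (b - 1)
        = (∑ k ∈ range m, (k : ℚ) ^ (b - 1)) - (0 : ℚ) ^ (b - 1) := by
      have h := Finset.sum_range_succ' (fun k => (k : ℚ) ^ (b - 1)) (m - 1)
      rw [show m - 1 + 1 = m by omega] at h
      rw [h]; push_cast; ring
    have hF := sum_range_pow m (b - 1)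
    rw [show b - 1 + 1 = b by omega] at hF
    rw [show ((b - 1 : ℕ) : ℚ) + 1 = (b : ℚ) by push_cast [Nat.cast_sub hb]; ring] at hF
    have hSq1 : Sq 1 b m = lamB b := by
      rw [Sq, sum_range_one]
      norm_num [show 1 + b - 1 - 0 = b by omega]
    have hSqb : Sq b 1 m = ∑ i ∈ range b, lamB (b - i) * (m : ℚ) ^ i / (i ! : ℚ) := by
      rw [Sq]
      refine sum_congr rfl fun i hi => ?_
      have hi' : i < b := mem_range.1 hi
      rw [show b + 1 - 2 - i = b - 1 - i by omega, Nat.choose_self,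
          show b + 1 - 1 - i = b - i by omega]
      norm_num
    have hrefl2 : ∑ i ∈ range b, lamB (b - i) * (m : ℚ) ^ i / (i ! : ℚ)
        = ∑ i ∈ range b, lamB (i + 1) * (m : ℚ) ^ (b - 1 - i) / ((b - 1 - i)! : ℚ) := by
      rw [← Finset.sum_range_reflect
        (fun i => lamB (i + 1) * (m : ℚ) ^ (b - 1 - i) / ((b - 1 - i)! : ℚ)) b]
      refine sum_congr rfl fun j hj => ?_
      have hj' : j < b := mem_range.1 hj
      rw [show b - 1 - j + 1 = b - j by omega, show b - 1 - (b - 1 - j) = j by omega]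
    rw [hrefl, hshift, hF, Rq, hSq1, hSqb, hrefl2, show 1 + b - 1 = b by omega]
    norm_num
    have hsplitL := Finset.sum_range_succ'
      (fun i => bernoulli i * ((b.choose i : ℕ) : ℚ) * (m : ℚ) ^ (b - i) / (b : ℚ)) (b - 1)
    have hsplitR := Finset.sum_range_succ
      (fun i => lamB (i + 1) * (m : ℚ) ^ (b - 1 - i) / ((b - 1 - i)! : ℚ)) (b - 1)
    rw [show b - 1 + 1 = b by omega] at hsplitL hsplitR
    rw [hsplitL, hsplitR]
    have hmid : ∀ i ∈ range (b - 1),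
        bernoulli (i + 1) * ((b.choose (i + 1) : ℕ) : ℚ) * (m : ℚ) ^ (b - (i + 1)) / (b : ℚ)
          = (((b - 1)! : ℕ) : ℚ) * (lamB (i + 1) * (m : ℚ) ^ (b - 1 - i) / ((b - 1 - i)! : ℚ)) := by
      intro i hi
      have hi' : i < b - 1 := mem_range.1 hi
      have hcf := Nat.choose_mul_factorial_mul_factorial (show i + 1 ≤ b by omega)
      have hcast : ((b.choose (i + 1) : ℕ) : ℚ) * ((i + 1)! : ℚ) * (((b - 1 - i)! : ℕ) : ℚ)
          = (b ! : ℚ) := by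
        rw [show b - 1 - i = b - (i + 1) by omega]; exact_mod_cast congrArg (Nat.cast : ℕ → ℚ) hcf
      have hbf : (b ! : ℚ) = (b : ℚ) * (((b - 1)! : ℕ) : ℚ) := by
        exact_mod_cast congrArg (Nat.cast : ℕ → ℚ) (Nat.mul_factorial_pred (by omega)).symm
      have h1 : ((i + 1)! : ℚ) ≠ 0 := by exact_mod_cast (Nat.factorial_pos _).ne'
      have h2 : (((b - 1 - i)! : ℕ) : ℚ) ≠ 0 := by exact_mod_cast (Nat.factorial_pos _).ne'
      have h3 : (b : ℚ) ≠ 0 := by exact_mod_cast (by omega : b ≠ 0)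
      rw [show b - (i + 1) = b - 1 - i by omega, lamB]
      field_simp
      linear_combination (bernoulli (i + 1)) * (hcast.trans hbf)
    rw [sum_congr rfl hmid, ← mul_sum]
    have hiii : (((b - 1)! : ℕ) : ℚ) * lamB b * ((-1) ^ (b - 1) + 1) = -(0 : ℚ) ^ (b - 1) := by
      rcases eq_or_lt_of_le hb with h | h
      · rw [← h]; norm_num [lamB, bernoulli_one]
      · rw [zero_pow (by omega : b - 1 ≠ 0), neg_zero]
        rcases Nat.even_or_odd b with he | ho
        · have hodd : Odd (b - 1) := by
            rcases he with ⟨k, hk⟩; exact ⟨k - 1, by omega⟩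
          rw [hodd.neg_one_pow]; ring
        · have hbo : bernoulli b = 0 := by
            rw [bernoulli_eq_bernoulli'_of_ne_one (by omega)]
            exact bernoulli'_eq_zero_of_odd ho (by omega)
          simp [lamB, hbo]
    have hbf : (b ! : ℚ) = (b : ℚ) * (((b - 1)! : ℕ) : ℚ) := by
      exact_mod_cast congrArg (Nat.cast : ℕ → ℚ) (Nat.mul_factorial_pred (by omega)).symm
    have h3 : (b : ℚ) ≠ 0 := by exact_mod_cast (by omega : b ≠ 0)
    have hlast : lamB (b - 1 + 1) = lamB b := by rw [show b - 1 + 1 = b by omega]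
    simp only [Nat.sub_self, pow_zero, Nat.factorial_zero, Nat.cast_one, hlast,
      Nat.choose_zero_right, bernoulli_zero, Nat.sub_zero, Nat.cast_zero]
    have hmb : (m : ℚ) ^ b / (b : ℚ) = (((b - 1)! : ℕ) : ℚ) * ((m : ℚ) ^ b / (b ! : ℚ)) := by
      rw [hbf]; field_simp
    linear_combination hmb - hiii
  | succ a ha IH =>
    have hpt : ∀ d ∈ range (m - 1),
        ((d + 1 : ℕ) : ℚ) ^ (a + 1 - 1) * ((m : ℚ) - ((d : ℚ) + 1)) ^ (b - 1)
          = (m : ℚ) * (((d + 1 : ℕ) : ℚ) ^ (a - 1) * ((m : ℚ) - ((d : ℚ) + 1)) ^ (b - 1))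
            - ((d + 1 : ℕ) : ℚ) ^ (a - 1) * ((m : ℚ) - ((d : ℚ) + 1)) ^ (b + 1 - 1) := by
      intro d hd
      rw [show a + 1 - 1 = (a - 1) + 1 by omega, show b + 1 - 1 = (b - 1) + 1 by omega,
        pow_succ, pow_succ]
      push_cast
      ring
    rw [sum_congr rfl hpt, sum_sub_distrib, ← mul_sum, IH b hb, IH (b + 1) (by omega)]
    have hstep := stepR a b m ha hb
    rw [show a + 1 - 1 = a by omega, show b + 1 - 1 = b by omega]
    have hfa : (a ! : ℚ) = (a : ℚ) * (((a - 1)! : ℕ) : ℚ) := by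
      exact_mod_cast congrArg (Nat.cast : ℕ → ℚ) (Nat.mul_factorial_pred (by omega)).symm
    have hfb : (b ! : ℚ) = (b : ℚ) * (((b - 1)! : ℕ) : ℚ) := by
      exact_mod_cast congrArg (Nat.cast : ℕ → ℚ) (Nat.mul_factorial_pred (by omega)).symm
    linear_combination (-((((a - 1)! : ℕ) : ℚ) * (((b - 1)! : ℕ) : ℚ))) * hstep
      - ((((b - 1)! : ℕ) : ℚ) * Rq (a + 1) b m) * hfa
      - ((((a - 1)! : ℕ) : ℚ) * Rq a (b + 1) m) * hfb

private lemma Rq_one (a b : ℕ) (ha : 1 ≤ a) (hb : 1 ≤ b) : Rq a b 1 = 0 := by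
  have h := convo a ha b hb 1 le_rfl
  simp only [Nat.sub_self, range_zero, sum_empty] at h
  have h1 : (((a - 1)! : ℕ) : ℚ) ≠ 0 := by exact_mod_cast (Nat.factorial_pos _).ne'
  have h2 : (((b - 1)! : ℕ) : ℚ) ≠ 0 := by exact_mod_cast (Nat.factorial_pos _).ne'
  field_simp at h
  exact (mul_eq_zero.1 h.symm).resolve_left (mul_ne_zero h1 h2)

private lemma hsumu (k : ℕ) (t : ℝ) (ht : |t| < 1) :
    Summable (fun d : ℕ => ((d + 1 : ℕ) : ℝ) ^ k * t ^ (d + 1)) := by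
  have h := summable_pow_mul_geometric_of_norm_lt_one (R := ℝ) k (by rwa [Real.norm_eq_abs])
  exact (summable_nat_add_iff (f := fun n : ℕ => (n : ℝ) ^ k * t ^ n) 1).2 h

private lemma hsumSq (c e : ℕ) (t : ℝ) (ht : |t| < 1) :
    Summable (fun d : ℕ => ((Sq c e (d + 1) : ℚ) : ℝ) * t ^ (d + 1)) := by
  have hrw : (fun d : ℕ => ((Sq c e (d + 1) : ℚ) : ℝ) * t ^ (d + 1))
      = fun d : ℕ => ∑ i ∈ Finset.range c,
          (((c + e - 2 - i).choose (c - 1 - i) : ℝ) * ((lamB (c + e - 1 - i) : ℚ) : ℝ) / (i ! : ℝ))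
            * (((d + 1 : ℕ) : ℝ) ^ i * t ^ (d + 1)) := by
    funext d
    rw [Sq]
    push_cast
    rw [Finset.sum_mul]
    exact Finset.sum_congr rfl fun i _ => by ring
  rw [hrw]
  exact summable_sum fun i _ => Summable.mul_left _ (hsumu i t ht)

private lemma group_sum (lam : ℕ → ℚ) (hlam : ∀ s : ℕ, 1 ≤ s → lam s = bernoulli s / (s ! : ℚ))
    (c e : ℕ) (hc : 1 ≤ c) (he : 1 ≤ e) (t : ℝ) (ht : |t| < 1) :
    ∑ j ∈ Finset.Icc 1 c,
        (-1 : ℝ) ^ (e - 1) * ((c + e - j - 1).choose (c - j) : ℝ) * ((lam (c + e - j) : ℚ) : ℝ) *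
          ((∑' d : ℕ, ((d + 1 : ℕ) : ℝ) ^ (j - 1) * t ^ (d + 1)) / (((j - 1)! : ℕ) : ℝ))
      = ∑' d : ℕ, (-1 : ℝ) ^ (e - 1) * ((Sq c e (d + 1) : ℚ) : ℝ) * t ^ (d + 1) := by
  have step1 : ∀ j ∈ Finset.Icc 1 c,
      (-1 : ℝ) ^ (e - 1) * ((c + e - j - 1).choose (c - j) : ℝ) * ((lam (c + e - j) : ℚ) : ℝ) *
          ((∑' d : ℕ, ((d + 1 : ℕ) : ℝ) ^ (j - 1) * t ^ (d + 1)) / (((j - 1)! : ℕ) : ℝ))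
        = ∑' d : ℕ, ((-1 : ℝ) ^ (e - 1) * ((c + e - j - 1).choose (c - j) : ℝ) *
            ((lam (c + e - j) : ℚ) : ℝ) / (((j - 1)! : ℕ) : ℝ))
              * (((d + 1 : ℕ) : ℝ) ^ (j - 1) * t ^ (d + 1)) := by
    intro j _
    rw [tsum_mul_left]
    ring
  rw [Finset.sum_congr rfl step1,
    ← Summable.tsum_finsetSum (fun j _ => Summable.mul_left _ (hsumu (j - 1) t ht))]
  refine tsum_congr fun d => ?_
  rw [← Finset.Ico_add_one_right_eq_Icc, Finset.sum_Ico_eq_sum_range, show c + 1 - 1 = c by omega, Sq]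
  push_cast
  rw [Finset.mul_sum, Finset.sum_mul]
  refine Finset.sum_congr rfl fun i hi => ?_
  have hi' : i < c := Finset.mem_range.1 hi
  rw [show c + e - (1 + i) - 1 = c + e - 2 - i by omega,
    show c - (1 + i) = c - 1 - i by omega,
    show c + e - (1 + i) = c + e - 1 - i by omega,
    show 1 + i - 1 = i by omega,
    hlam (c + e - 1 - i) (by omega)]
  rw [lamB]
  push_cast
  ring

private lemma keyF (lam : ℕ → ℚ) (hlam : ∀ s : ℕ, 1 ≤ s → lam s = bernoulli s / (s ! : ℚ))
    (s1 s2 : ℕ) (hs1 : 1 ≤ s1) (hs2 : 1 ≤ s2) (t : ℝ) (ht0 : 0 < t) (ht1 : t < 1) :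
    (∑' d : ℕ, ((d + 1 : ℕ) : ℝ) ^ (s1 - 1) * t ^ (d + 1)) / (((s1 - 1)! : ℕ) : ℝ) *
      ((∑' d : ℕ, ((d + 1 : ℕ) : ℝ) ^ (s2 - 1) * t ^ (d + 1)) / (((s2 - 1)! : ℕ) : ℝ)) =
    (∑' d : ℕ, ((d + 1 : ℕ) : ℝ) ^ (s1 + s2 - 1) * t ^ (d + 1)) / (((s1 + s2 - 1)! : ℕ) : ℝ) +
      (∑ j ∈ Finset.Icc 1 s1,
        (-1 : ℝ) ^ (s2 - 1) * ((s1 + s2 - j - 1).choose (s1 - j) : ℝ) *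
          ((lam (s1 + s2 - j) : ℚ) : ℝ) *
          ((∑' d : ℕ, ((d + 1 : ℕ) : ℝ) ^ (j - 1) * t ^ (d + 1)) / (((j - 1)! : ℕ) : ℝ))) +
      ∑ j ∈ Finset.Icc 1 s2,
        (-1 : ℝ) ^ (s1 - 1) * ((s1 + s2 - j - 1).choose (s2 - j) : ℝ) *
          ((lam (s1 + s2 - j) : ℚ) : ℝ) *
          ((∑' d : ℕ, ((d + 1 : ℕ) : ℝ) ^ (j - 1) * t ^ (d + 1)) / (((j - 1)! : ℕ) : ℝ)) := by
  have ht : |t| < 1 := by rw [abs_of_pos ht0]; exact ht1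
  have htn : ‖t‖ < 1 := by rwa [Real.norm_eq_abs]
  -- summable families
  have hT0 : Summable (fun d : ℕ =>
      ((d + 1 : ℕ) : ℝ) ^ (s1 + s2 - 1) * t ^ (d + 1) / (((s1 + s2 - 1)! : ℕ) : ℝ)) :=
    (hsumu (s1 + s2 - 1) t ht).div_const _
  have hT1 : Summable (fun d : ℕ =>
      (-1 : ℝ) ^ (s2 - 1) * ((Sq s1 s2 (d + 1) : ℚ) : ℝ) * t ^ (d + 1)) := by
    have := (hsumSq s1 s2 t ht).mul_left ((-1 : ℝ) ^ (s2 - 1))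
    exact this.congr fun d => by ring
  have hT2 : Summable (fun d : ℕ =>
      (-1 : ℝ) ^ (s1 - 1) * ((Sq s2 s1 (d + 1) : ℚ) : ℝ) * t ^ (d + 1)) := by
    have := (hsumSq s2 s1 t ht).mul_left ((-1 : ℝ) ^ (s1 - 1))
    exact this.congr fun d => by ring
  have hV : Summable (fun d : ℕ =>
      ((d + 1 : ℕ) : ℝ) ^ (s1 + s2 - 1) * t ^ (d + 1) / (((s1 + s2 - 1)! : ℕ) : ℝ)
        + (-1 : ℝ) ^ (s2 - 1) * ((Sq s1 s2 (d + 1) : ℚ) : ℝ) * t ^ (d + 1)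
        + (-1 : ℝ) ^ (s1 - 1) * ((Sq s2 s1 (d + 1) : ℚ) : ℝ) * t ^ (d + 1)) :=
    (hT0.add hT1).add hT2
  -- pointwise identification with Rq
  have hGT : ∀ m : ℕ, 1 ≤ m →
      ((Rq s1 s2 m : ℚ) : ℝ) * t ^ m
        = ((m : ℕ) : ℝ) ^ (s1 + s2 - 1) * t ^ m / (((s1 + s2 - 1)! : ℕ) : ℝ)
          + (-1 : ℝ) ^ (s2 - 1) * ((Sq s1 s2 m : ℚ) : ℝ) * t ^ m
          + (-1 : ℝ) ^ (s1 - 1) * ((Sq s2 s1 m : ℚ) : ℝ) * t ^ m := by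
    intro m _
    rw [Rq]
    push_cast
    ring
  -- RHS as a single tsum
  have hRHS2 : ∑ j ∈ Finset.Icc 1 s2,
        (-1 : ℝ) ^ (s1 - 1) * ((s1 + s2 - j - 1).choose (s2 - j) : ℝ) *
          ((lam (s1 + s2 - j) : ℚ) : ℝ) *
          ((∑' d : ℕ, ((d + 1 : ℕ) : ℝ) ^ (j - 1) * t ^ (d + 1)) / (((j - 1)! : ℕ) : ℝ))
      = ∑' d : ℕ, (-1 : ℝ) ^ (s1 - 1) * ((Sq s2 s1 (d + 1) : ℚ) : ℝ) * t ^ (d + 1) := by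
    rw [← group_sum lam hlam s2 s1 hs2 hs1 t ht]
    refine Finset.sum_congr rfl fun j hj => ?_
    rw [show s1 + s2 - j - 1 = s2 + s1 - j - 1 by omega, show s1 + s2 - j = s2 + s1 - j by omega]
  have hRHS0 : (∑' d : ℕ, ((d + 1 : ℕ) : ℝ) ^ (s1 + s2 - 1) * t ^ (d + 1)) / (((s1 + s2 - 1)! : ℕ) : ℝ)
      = ∑' d : ℕ, ((d + 1 : ℕ) : ℝ) ^ (s1 + s2 - 1) * t ^ (d + 1) / (((s1 + s2 - 1)! : ℕ) : ℝ) :=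
    tsum_div_const.symm
  rw [hRHS0, group_sum lam hlam s1 s2 hs1 hs2 t ht, hRHS2, ← Summable.tsum_add hT0 hT1,
    ← Summable.tsum_add (hT0.add hT1) hT2]
  -- LHS as a single tsum via Cauchy product
  have hnorm : ∀ k : ℕ, Summable (fun d : ℕ => ‖((d + 1 : ℕ) : ℝ) ^ k * t ^ (d + 1)‖) := by
    intro k
    refine (hsumu k t ht).congr fun d => ?_
    rw [Real.norm_of_nonneg (by positivity)]
  have hC := tsum_mul_tsum_eq_tsum_sum_antidiagonal_of_summable_norm
    (hnorm (s1 - 1)) (hnorm (s2 - 1))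
  have hinner : ∀ N : ℕ,
      ∑ kl ∈ Finset.HasAntidiagonal.antidiagonal N,
          ((kl.1 + 1 : ℕ) : ℝ) ^ (s1 - 1) * t ^ (kl.1 + 1) *
            (((kl.2 + 1 : ℕ) : ℝ) ^ (s2 - 1) * t ^ (kl.2 + 1))
        = (((s1 - 1)! : ℕ) : ℝ) * (((s2 - 1)! : ℕ) : ℝ) * (((Rq s1 s2 (N + 2) : ℚ) : ℝ) * t ^ (N + 2)) := by
    intro N
    rw [Finset.Nat.sum_antidiagonal_eq_sum_range_succ_mk]
    have hq := convo s1 hs1 s2 hs2 (N + 2) (by omega)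
    rw [show N + 2 - 1 = N + 1 by omega] at hq
    have hcast := congrArg (fun x : ℚ => (x : ℝ)) hq
    push_cast at hcast
    calc ∑ k ∈ Finset.range (N + 1),
          ((k + 1 : ℕ) : ℝ) ^ (s1 - 1) * t ^ (k + 1) *
            (((N - k + 1 : ℕ) : ℝ) ^ (s2 - 1) * t ^ (N - k + 1))
        = ∑ k ∈ Finset.range (N + 1),
            (((k : ℝ) + 1) ^ (s1 - 1) * (((N : ℝ) + 2) - ((k : ℝ) + 1)) ^ (s2 - 1)) * t ^ (N + 2) := by
          refine Finset.sum_congr rfl fun k hk => ?_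
          have hk' : k < N + 1 := Finset.mem_range.1 hk
          have h2 : ((N - k + 1 : ℕ) : ℝ) = ((N : ℝ) + 2) - ((k : ℝ) + 1) := by
            push_cast [Nat.cast_sub (show k ≤ N by omega)]
            ring
          rw [h2, show N + 2 = (k + 1) + (N - k + 1) by omega, pow_add]
          push_cast
          ring
      _ = (((s1 - 1)! : ℕ) : ℝ) * (((s2 - 1)! : ℕ) : ℝ) * (((Rq s1 s2 (N + 2) : ℚ) : ℝ) * t ^ (N + 2)) := by
          rw [← Finset.sum_mul, hcast]
          ring
  have hfac1 : (((s1 - 1)! : ℕ) : ℝ) ≠ 0 := by exact_mod_cast (Nat.factorial_pos _).ne'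
  have hfac2 : (((s2 - 1)! : ℕ) : ℝ) ≠ 0 := by exact_mod_cast (Nat.factorial_pos _).ne'
  have hL : (∑' d : ℕ, ((d + 1 : ℕ) : ℝ) ^ (s1 - 1) * t ^ (d + 1)) / (((s1 - 1)! : ℕ) : ℝ) *
      ((∑' d : ℕ, ((d + 1 : ℕ) : ℝ) ^ (s2 - 1) * t ^ (d + 1)) / (((s2 - 1)! : ℕ) : ℝ))
      = ∑' N : ℕ, ((Rq s1 s2 (N + 2) : ℚ) : ℝ) * t ^ (N + 2) := by
    rw [div_mul_div_comm, hC, tsum_congr hinner, ← tsum_div_const]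
    refine tsum_congr fun N => ?_
    rw [mul_comm, mul_div_assoc, div_self (mul_ne_zero hfac1 hfac2), mul_one]
  rw [hL, Summable.tsum_eq_zero_add hV]
  have hzero : ((Rq s1 s2 (0 + 1) : ℚ) : ℝ) * t ^ (0 + 1) = 0 := by
    rw [Rq_one s1 s2 hs1 hs2]; norm_num
  rw [← hGT (0 + 1) le_rfl, hzero, zero_add]
  exact tsum_congr fun N => by rw [← hGT (N + 2) (by omega)]


/-- Stuffle identity for Eulerian kernels: with `P_{s-1}` the modified Eulerian
polynomials (`∑_{d≥1} d^{s-1} t^d = P_{s-1}(t)/(1-t)^s`) and `λ₀ = 1`,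
`λ_s = B_s/s!` (Bernoulli numbers), for `0 < q < 1`, `n ≥ 1`:
`(n^{r₁-1}P_{s₁-1}(qⁿ)/((s₁-1)!(r₁-1)!(1-qⁿ)^{s₁})) ⬝ (n^{r₂-1}P_{s₂-1}(qⁿ)/((s₂-1)!(r₂-1)!(1-qⁿ)^{s₂}))`
equals the stated binomial-Bernoulli combination. -/
theorem eulerian_stuffle (P : ℕ → Polynomial ℝ)
    (hP : ∀ s : ℕ, 1 ≤ s → ∀ t : ℝ, |t| < 1 →
      ∑' d : ℕ, ((d + 1 : ℕ) : ℝ) ^ (s - 1) * t ^ (d + 1) = (P (s - 1)).eval t / (1 - t) ^ s)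
    (lam : ℕ → ℚ) (hlam0 : lam 0 = 1) (hlam : ∀ s : ℕ, 1 ≤ s → lam s = bernoulli s / (s ! : ℚ))
    (s1 s2 r1 r2 : ℕ) (hs1 : 1 ≤ s1) (hs2 : 1 ≤ s2) (hr1 : 1 ≤ r1) (hr2 : 1 ≤ r2)
    (q : ℝ) (h0 : 0 < q) (h1 : q < 1) (n : ℕ) (hn : 1 ≤ n) :
    ((n : ℝ) ^ (r1 - 1) * (P (s1 - 1)).eval (q ^ n) /
        (((s1 - 1)! : ℝ) * ((r1 - 1)! : ℝ) * (1 - q ^ n) ^ s1)) *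
      ((n : ℝ) ^ (r2 - 1) * (P (s2 - 1)).eval (q ^ n) /
        (((s2 - 1)! : ℝ) * ((r2 - 1)! : ℝ) * (1 - q ^ n) ^ s2)) =
    (Nat.choose (r1 + r2 - 2) (r1 - 1) : ℝ) *
      ((n : ℝ) ^ (r1 + r2 - 2) / ((r1 + r2 - 2)! : ℝ)) *
      ((P (s1 + s2 - 1)).eval (q ^ n) / (((s1 + s2 - 1)! : ℝ) * (1 - q ^ n) ^ (s1 + s2)) +
        (∑ j ∈ Finset.Icc 1 s1,
          (-1 : ℝ) ^ (s2 - 1) * (Nat.choose (s1 + s2 - j - 1) (s1 - j) : ℝ) *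
            ((lam (s1 + s2 - j) : ℝ)) *
            ((P (j - 1)).eval (q ^ n) / (((j - 1)! : ℝ) * (1 - q ^ n) ^ j))) +
        ∑ j ∈ Finset.Icc 1 s2,
          (-1 : ℝ) ^ (s1 - 1) * (Nat.choose (s1 + s2 - j - 1) (s2 - j) : ℝ) *
            ((lam (s1 + s2 - j) : ℝ)) *
            ((P (j - 1)).eval (q ^ n) / (((j - 1)! : ℝ) * (1 - q ^ n) ^ j))) := by
  set t := q ^ n with htdef
  have ht0 : 0 < t := pow_pos h0 n
  have ht1 : t < 1 := pow_lt_one₀ h0.le h1 (by omega)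
  have htabs : |t| < 1 := by rw [abs_of_pos ht0]; exact ht1
  have h1t : (1 : ℝ) - t ≠ 0 := by linarith
  have hpne : ∀ s : ℕ, ((1 : ℝ) - t) ^ s ≠ 0 := fun s => pow_ne_zero _ h1t
  have hEval : ∀ s : ℕ, 1 ≤ s → (P (s - 1)).eval t
      = (∑' d : ℕ, ((d + 1 : ℕ) : ℝ) ^ (s - 1) * t ^ (d + 1)) * (1 - t) ^ s := by
    intro s hs
    exact ((eq_div_iff (hpne s)).1 (hP s hs t htabs)).symm
  have hS1rw : (∑ j ∈ Finset.Icc 1 s1,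
        (-1 : ℝ) ^ (s2 - 1) * (Nat.choose (s1 + s2 - j - 1) (s1 - j) : ℝ) *
          ((lam (s1 + s2 - j) : ℝ)) *
          ((P (j - 1)).eval t / (((j - 1)! : ℝ) * (1 - t) ^ j)))
      = ∑ j ∈ Finset.Icc 1 s1,
        (-1 : ℝ) ^ (s2 - 1) * (Nat.choose (s1 + s2 - j - 1) (s1 - j) : ℝ) *
          ((lam (s1 + s2 - j) : ℝ)) *
          ((∑' d : ℕ, ((d + 1 : ℕ) : ℝ) ^ (j - 1) * t ^ (d + 1)) / ((j - 1)! : ℝ)) := by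
    refine Finset.sum_congr rfl fun j hj => ?_
    rw [hEval j (Finset.mem_Icc.1 hj).1, mul_div_mul_right _ _ (hpne j)]
  have hS2rw : (∑ j ∈ Finset.Icc 1 s2,
        (-1 : ℝ) ^ (s1 - 1) * (Nat.choose (s1 + s2 - j - 1) (s2 - j) : ℝ) *
          ((lam (s1 + s2 - j) : ℝ)) *
          ((P (j - 1)).eval t / (((j - 1)! : ℝ) * (1 - t) ^ j)))
      = ∑ j ∈ Finset.Icc 1 s2,
        (-1 : ℝ) ^ (s1 - 1) * (Nat.choose (s1 + s2 - j - 1) (s2 - j) : ℝ) *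
          ((lam (s1 + s2 - j) : ℝ)) *
          ((∑' d : ℕ, ((d + 1 : ℕ) : ℝ) ^ (j - 1) * t ^ (d + 1)) / ((j - 1)! : ℝ)) := by
    refine Finset.sum_congr rfl fun j hj => ?_
    rw [hEval j (Finset.mem_Icc.1 hj).1, mul_div_mul_right _ _ (hpne j)]
  rw [hEval s1 hs1, hEval s2 hs2, hEval (s1 + s2) (by omega), hS1rw, hS2rw,
    mul_div_mul_right _ _ (hpne (s1 + s2)),
    ← keyF lam hlam s1 s2 hs1 hs2 t ht0 ht1]
  have hrfac : (Nat.choose (r1 + r2 - 2) (r1 - 1) : ℝ) * ((r1 - 1)! : ℝ) * ((r2 - 1)! : ℝ)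
      = ((r1 + r2 - 2)! : ℝ) := by
    have h := Nat.choose_mul_factorial_mul_factorial (show r1 - 1 ≤ r1 + r2 - 2 by omega)
    rw [show r1 + r2 - 2 - (r1 - 1) = r2 - 1 by omega] at h
    exact_mod_cast congrArg (Nat.cast : ℕ → ℝ) h
  have hB1 : ((r1 - 1)! : ℝ) ≠ 0 := by exact_mod_cast (Nat.factorial_pos _).ne'
  have hB2 : ((r2 - 1)! : ℝ) ≠ 0 := by exact_mod_cast (Nat.factorial_pos _).ne'
  have hA1 : ((s1 - 1)! : ℝ) ≠ 0 := by exact_mod_cast (Nat.factorial_pos _).ne'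
  have hA2 : ((s2 - 1)! : ℝ) ≠ 0 := by exact_mod_cast (Nat.factorial_pos _).ne'
  have hCrf : ((r1 + r2 - 2)! : ℝ) ≠ 0 := by exact_mod_cast (Nat.factorial_pos _).ne'
  have hfactor : (Nat.choose (r1 + r2 - 2) (r1 - 1) : ℝ) * ((n : ℝ) ^ (r1 + r2 - 2) / ((r1 + r2 - 2)! : ℝ))
      = (n : ℝ) ^ (r1 - 1) / ((r1 - 1)! : ℝ) * ((n : ℝ) ^ (r2 - 1) / ((r2 - 1)! : ℝ)) := by
    rw [show (n : ℝ) ^ (r1 + r2 - 2) = (n : ℝ) ^ (r1 - 1) * (n : ℝ) ^ (r2 - 1) by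
        rw [← pow_add]; congr 1; omega, ← hrfac]
    have hch : (Nat.choose (r1 + r2 - 2) (r1 - 1) : ℝ) ≠ 0 := by
      exact_mod_cast (Nat.choose_pos (show r1 - 1 ≤ r1 + r2 - 2 by omega)).ne'
    field_simp
  rw [hfactor]
  field_simp
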